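/- Let $r \geq 1$, let $g = \mathrm{diag}(g_1, \ldots, g_{r+1})$ with distinct nonzero $g_i$ satisfying $\prod_i g_i = 1$, and let $z_{i,m}$ denote the Schur polynomial $s_{(m^i)}(g_1, \ldots, g_{r+1})$ associated to the rectangular partition with $i$ rows of length $m$ (for $1 \leq i \leq r$, $m \geq 0$). Then for all $1 \leq i \leq r$ and $m \geq 1$, $z_{i,m+1}\, z_{i,m-1} = z_{i,m}^2 - z_{i-1,m}\, z_{i+1,m}$, where $z_{0,m} = 1$ and $z_{r+1,m} = \prod_i g_i^m = 1$. -/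

import Mathlib

open Matrix

/-- Cramer's rule in row form: `det M • x` is a combination of the rows of `M`. -/
private lemma cramer_rows {n : ℕ} (M : Matrix (Fin n) (Fin n) ℂ) (x : Fin n → ℂ) :
    M.det • x = ∑ j, ((M.updateRow j x).det) • M j := by
  have h := Matrix.mulVec_cramer Mᵀ x
  rw [Matrix.det_transpose] at h
  funext k
  have hk := congrFun h k
  simp only [Matrix.mulVec, dotProduct, Matrix.transpose_apply, Matrix.cramer_apply,
    Matrix.updateCol_transpose, Matrix.det_transpose, Pi.smul_apply, smul_eq_mul] at hk
  simp only [Finset.sum_apply, Pi.smul_apply, smul_eq_mul]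
  rw [← hk]
  exact Finset.sum_congr rfl fun j _ => mul_comm _ _

private lemma det_updateRow_finsum {n : ℕ} (B : Matrix (Fin n) (Fin n) ℂ) (t : Fin n)
    (f : Fin n → (Fin n → ℂ)) :
    (B.updateRow t (∑ j, f j)).det = ∑ j, (B.updateRow t (f j)).det := by
  classical
  have : ∀ s : Finset (Fin n), (B.updateRow t (∑ j ∈ s, f j)).det
      = ∑ j ∈ s, (B.updateRow t (f j)).det := by
    intro s
    induction s using Finset.induction_on with
    | empty =>
        simp only [Finset.sum_empty]
        exact Matrix.det_eq_zero_of_row_eq_zero t (by simp)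
    | @insert a s ha ih =>
        rw [Finset.sum_insert ha, Finset.sum_insert ha, Matrix.det_updateRow_add, ih]
  exact this Finset.univ

/-- The three-term Plücker relation for determinants sharing `n - 2` rows. -/
private lemma pluecker {n : ℕ} (R0 : Matrix (Fin n) (Fin n) ℂ) {s t : Fin n} (hst : s ≠ t)
    (a b c d : Fin n → ℂ) :
    ((R0.updateRow s c).updateRow t d).det * ((R0.updateRow s b).updateRow t a).det
      = ((R0.updateRow s a).updateRow t d).det * ((R0.updateRow s b).updateRow t c).det
      + ((R0.updateRow s c).updateRow t a).det * ((R0.updateRow s b).updateRow t d).det := by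
  classical
  set M : Matrix (Fin n) (Fin n) ℂ := (R0.updateRow s c).updateRow t d with hM
  set B : Matrix (Fin n) (Fin n) ℂ := R0.updateRow s b with hB
  have hover : ∀ x y z : Fin n → ℂ,
      ((R0.updateRow s x).updateRow t y).updateRow s z = (R0.updateRow s z).updateRow t y := by
    intro x y z
    ext j k
    by_cases hjs : j = s
    · subst hjs
      simp [Matrix.updateRow_apply, hst]
    · by_cases hjt : j = t
      · subst hjt; simp [Matrix.updateRow_apply, hjs, Ne.symm hst]
      · simp [Matrix.updateRow_apply, hjs, hjt]
  have hover2 : ∀ x y z : Fin n → ℂ,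
      ((R0.updateRow s x).updateRow t y).updateRow t z = (R0.updateRow s x).updateRow t z := by
    intro x y z
    ext j k
    by_cases hjt : j = t <;> simp [Matrix.updateRow_apply, hjt]
  have key := cramer_rows M a
  have lhs1 : M.det * (B.updateRow t a).det = (B.updateRow t (M.det • a)).det := by
    rw [Matrix.det_updateRow_smul]
  rw [lhs1, key, det_updateRow_finsum]
  have hterm : ∀ j, (B.updateRow t (((M.updateRow j a).det) • M j)).det
      = ((M.updateRow j a).det) * (B.updateRow t (M j)).det := fun j =>
    Matrix.det_updateRow_smul _ _ _ _
  simp only [hterm]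
  have hzero : ∀ j ∈ (Finset.univ : Finset (Fin n)), j ∉ ({s, t} : Finset (Fin n)) →
      ((M.updateRow j a).det) * (B.updateRow t (M j)).det = 0 := by
    intro j _ hj
    simp only [Finset.mem_insert, Finset.mem_singleton, not_or] at hj
    obtain ⟨hjs, hjt⟩ := hj
    have hMj : M j = B j := by
      rw [hM, hB, Matrix.updateRow_ne hjt, Matrix.updateRow_ne hjs, Matrix.updateRow_ne hjs]
    rw [hMj, Matrix.det_updateRow_eq_zero hjt, mul_zero]
  rw [← Finset.sum_subset (Finset.subset_univ {s, t}) hzero, Finset.sum_pair hst]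
  have hMs : M s = c := by rw [hM, Matrix.updateRow_ne hst, Matrix.updateRow_self]
  have hMt : M t = d := by rw [hM, Matrix.updateRow_self]
  have hcs : M.updateRow s a = (R0.updateRow s a).updateRow t d := hover c d a
  have hct : M.updateRow t a = (R0.updateRow s c).updateRow t a := hover2 c d a
  rw [hMs, hMt, hcs, hct]

/-- numerator matrix of the bialternant formula -/
private def Nmat (r : ℕ) (g : Fin (r + 1) → ℂ) (a b : ℕ) :
    Matrix (Fin (r + 1)) (Fin (r + 1)) ℂ :=
  Matrix.of fun j k : Fin (r + 1) => g k ^ ((if (j : ℕ) < a then b else 0) + (r - (j : ℕ)))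

/-- numerator matrix with all exponents shifted by one -/
private def NmatS (r : ℕ) (g : Fin (r + 1) → ℂ) (a b : ℕ) :
    Matrix (Fin (r + 1)) (Fin (r + 1)) ℂ :=
  Matrix.of fun j k : Fin (r + 1) =>
    g k ^ (((if (j : ℕ) < a then b else 0) + (r - (j : ℕ))) + 1)

private lemma det_shift {r : ℕ} (g : Fin (r + 1) → ℂ) (hgprod : ∏ i, g i = 1)
    (a b : ℕ) : (NmatS r g a b).det = (Nmat r g a b).det := by
  have h : NmatS r g a b = Matrix.of fun j k => g k * (Nmat r g a b) j k := by
    ext j k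
    simp only [NmatS, Nmat, Matrix.of_apply]
    rw [pow_succ]
    ring
  rw [h, Matrix.det_mul_row, hgprod, one_mul]

private lemma cast_sign (k : ℕ) : ((((-1 : ℤˣ) ^ k : ℤˣ) : ℤ) : ℂ) = (-1 : ℂ) ^ k := by
  push_cast
  ring

set_option maxHeartbeats 1600000

/-- The rectangular Schur polynomials `z_{i,m} = s_{(m^i)}(g₁, …, g_{r+1})`
(expressed via the bialternant formula for distinct `gᵢ` with `∏ gᵢ = 1`) satisfy
the discrete Hirota (Q-system) relations of type `A_r`. Note `z_{0,m} = 1` and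
`z_{r+1,m} = (∏ gᵢ)^m = 1` are automatic from the bialternant formula. -/
theorem rectangular_schur_hirota (r : ℕ) (hr : 1 ≤ r)
    (g : Fin (r + 1) → ℂ) (hg0 : ∀ i, g i ≠ 0) (hgdist : Function.Injective g)
    (hgprod : ∏ i, g i = 1) :
    let z : ℕ → ℕ → ℂ := fun i m =>
      Matrix.det (Matrix.of fun j k : Fin (r + 1) =>
          g k ^ ((if (j : ℕ) < i then m else 0) + (r - (j : ℕ)))) /
        Matrix.det (Matrix.of fun j k : Fin (r + 1) => g k ^ (r - (j : ℕ)))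
    ∀ i : ℕ, 1 ≤ i → i ≤ r → ∀ m : ℕ, 1 ≤ m →
      z i (m + 1) * z i (m - 1) = z i m ^ 2 - z (i - 1) m * z (i + 1) m := by
  intro z i hi1 hir m hm1
  obtain ⟨m', rfl⟩ : ∃ m', m = m' + 1 := ⟨m - 1, by omega⟩
  set V : ℂ := Matrix.det (Matrix.of fun j k : Fin (r + 1) => g k ^ (r - (j : ℕ))) with hVdef
  have hz : ∀ a b : ℕ, z a b = (Nmat r g a b).det / V := fun a b => rfl
  -- nonvanishing of the Vandermonde denominator
  have hV : V ≠ 0 := by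
    have h1 : (Matrix.of fun j k : Fin (r + 1) => g k ^ (r - (j : ℕ)))
        = ((Matrix.vandermonde g)ᵀ).submatrix Fin.revPerm id := by
      ext j k
      simp [Matrix.vandermonde, Fin.val_rev]
    have h2 : ¬ (Matrix.vandermonde g).det = 0 :=
      Matrix.det_vandermonde_ne_zero_iff.mpr hgdist
    rw [hVdef, h1, Matrix.det_permute]
    rcases Int.units_eq_one_or (Equiv.Perm.sign (Fin.revPerm : Equiv.Perm (Fin (r+1)))) with h | h <;>
      rw [h] <;> simpa using h2
  have key : (Nmat r g (i-1) (m'+1)).det * (Nmat r g (i+1) (m'+1)).det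
      = (Nmat r g i (m'+1)).det ^ 2 - (Nmat r g i (m'+2)).det * (Nmat r g i m').det := by
    classical
    set s : Fin (r + 1) := ⟨i - 1, by omega⟩ with hs
    set t : Fin (r + 1) := ⟨r, by omega⟩ with ht
    have hsv : (s : ℕ) = i - 1 := rfl
    have htv : (t : ℕ) = r := rfl
    have hst : s ≠ t := by
      intro h
      have := congrArg Fin.val h
      rw [hsv, htv] at this
      omega
    have htl : t = Fin.last r := rfl
    set va : Fin (r + 1) → ℂ := fun k => g k ^ (m' + 1 + r + 1) with hva
    set vb : Fin (r + 1) → ℂ := fun k => g k ^ (m' + 1 + (r - (i - 1))) with hvb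
    set vc : Fin (r + 1) → ℂ := fun k => g k ^ (r - (i - 1)) with hvc
    set vd : Fin (r + 1) → ℂ := fun k => g k ^ (0 : ℕ) with hvd
    set R0 := Nmat r g i (m' + 1) with hR0
    set ci : Fin (r + 1) := ⟨i, by omega⟩ with hci
    have hcv : (ci : ℕ) = i := rfl
    set σ2 : Equiv.Perm (Fin (r + 1)) :=
      (Fin.cycleRange ci)⁻¹ * Fin.cycleRange (Fin.last r) with hσ2
    -- pointwise values of σ2
    have hσ2a : ∀ j : Fin (r + 1), (j : ℕ) < i → σ2 j = j := by
      intro j hj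
      have h1 : Fin.cycleRange (Fin.last r) j = j + 1 :=
        Fin.cycleRange_of_lt (by rw [Fin.lt_def, Fin.val_last]; omega)
      rw [hσ2, Equiv.Perm.mul_apply, h1, Equiv.Perm.inv_eq_iff_eq]
      exact (Fin.cycleRange_of_lt (by rw [Fin.lt_def, hcv]; omega)).symm
    have hadd1 : ∀ j : Fin (r + 1), (j : ℕ) < r → ((j + 1 : Fin (r + 1)) : ℕ) = (j : ℕ) + 1 := by
      intro j hj
      exact Fin.val_add_one_of_lt (by rw [Fin.lt_def, Fin.val_last]; omega)
    have hσ2b : ∀ j : Fin (r + 1), i ≤ (j : ℕ) → (j : ℕ) < r → σ2 j = j + 1 := by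
      intro j hj1 hj2
      have h1 : Fin.cycleRange (Fin.last r) j = j + 1 :=
        Fin.cycleRange_of_lt (by rw [Fin.lt_def, Fin.val_last]; omega)
      rw [hσ2, Equiv.Perm.mul_apply, h1, Equiv.Perm.inv_eq_iff_eq]
      exact (Fin.cycleRange_of_gt (by rw [Fin.lt_def, hcv, hadd1 j hj2]; omega)).symm
    have hσ2c : σ2 t = ci := by
      rw [hσ2, Equiv.Perm.mul_apply, htl, Fin.cycleRange_self, Equiv.Perm.inv_eq_iff_eq]
      exact (Fin.cycleRange_self ci).symm
    have hrot : ∀ j : Fin (r + 1), (j : ℕ) < r →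
        ((finRotate (r + 1) j : Fin (r + 1)) : ℕ) = (j : ℕ) + 1 := by
      intro j hj
      rw [finRotate_succ_apply]
      exact hadd1 j hj
    have hrotl : finRotate (r + 1) t = 0 := by rw [htl]; exact finRotate_last
    -- basic rows of R0
    have hR0s : R0 s = vb := by
      funext k
      simp only [hR0, Nmat, Matrix.of_apply, hva, hvb, hsv]
      congr 1
      rw [if_pos (by omega : i - 1 < i)]
    have hR0t : R0 t = vd := by
      funext k
      simp only [hR0, Nmat, Matrix.of_apply, hvd, htv]
      congr 1
      rw [if_neg (by omega : ¬ r < i)]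
      omega
    have hRb : R0.updateRow s vb = R0 := by rw [← hR0s, Matrix.updateRow_eq_self]
    -- the six identifications
    have h_bd : (R0.updateRow s vb).updateRow t vd = R0 := by
      rw [hRb, ← hR0t, Matrix.updateRow_eq_self]
    have h_cd : (R0.updateRow s vc).updateRow t vd = Nmat r g (i - 1) (m' + 1) := by
      ext j k
      simp only [Matrix.updateRow_apply, Nmat, Matrix.of_apply, hR0, hva, hvb, hvc, hvd]
      by_cases hjt : j = t
      · rw [if_pos hjt, hjt, htv]
        refine congrArg (fun e => g k ^ e) ?_
        rw [if_neg (by omega : ¬ r < i - 1)]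
        omega
      · rw [if_neg hjt]
        by_cases hjs : j = s
        · rw [if_pos hjs, hjs, hsv]
          refine congrArg (fun e => g k ^ e) ?_
          rw [if_neg (by omega : ¬ i - 1 < i - 1)]
          omega
        · rw [if_neg hjs]
          have hjv : (j : ℕ) ≠ i - 1 := fun h => hjs (Fin.ext (h.trans hsv.symm))
          refine congrArg (fun e => g k ^ e) ?_
          split_ifs <;> omega
    have h_ad : (R0.updateRow s va).updateRow t vd
        = (Nmat r g i (m' + 2)).submatrix (Fin.cycleRange s) id := by
      ext j k
      simp only [Matrix.updateRow_apply, Matrix.submatrix_apply, id_eq, Nmat, Matrix.of_apply,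
        hR0, hva, hvd]
      rcases lt_trichotomy j s with hlt | heq | hgt
      · have hjs : j ≠ s := ne_of_lt hlt
        have hjt : j ≠ t := by
          intro h; rw [h, Fin.lt_def, hsv, htv] at hlt; omega
        rw [if_neg hjt, if_neg hjs]
        have hcoe : ((Fin.cycleRange s j : Fin (r + 1)) : ℕ) = (j : ℕ) + 1 :=
          Fin.coe_cycleRange_of_lt hlt
        have hjv : (j : ℕ) < i - 1 := by rw [Fin.lt_def, hsv] at hlt; omega
        rw [hcoe]
        refine congrArg (fun e => g k ^ e) ?_
        split_ifs <;> omega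
      · rw [if_neg (by rw [heq]; exact hst), if_pos heq, heq, Fin.cycleRange_self]
        refine congrArg (fun e => g k ^ e) ?_
        rw [if_pos (show ((0 : Fin (r + 1)) : ℕ) < i by simp only [Fin.val_zero]; omega)]
        simp only [Fin.val_zero]
        omega
      · have hjs : j ≠ s := (ne_of_lt hgt).symm
        rw [Fin.cycleRange_of_gt hgt]
        have hjv : i - 1 < (j : ℕ) := by rw [Fin.lt_def, hsv] at hgt; omega
        by_cases hjt : j = t
        · rw [if_pos hjt, hjt, htv]
          refine congrArg (fun e => g k ^ e) ?_
          rw [if_neg (by omega : ¬ r < i)]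
          omega
        · rw [if_neg hjt, if_neg hjs]
          refine congrArg (fun e => g k ^ e) ?_
          split_ifs <;> omega
    have h_ca : (R0.updateRow s vc).updateRow t va
        = (NmatS r g i (m' + 1)).submatrix (finRotate (r + 1)) id := by
      ext j k
      simp only [Matrix.updateRow_apply, Matrix.submatrix_apply, id_eq, NmatS, Nmat,
        Matrix.of_apply, hR0, hva, hvc]
      by_cases hjt : j = t
      · rw [if_pos hjt, hjt, hrotl]
        refine congrArg (fun e => g k ^ e) ?_
        rw [if_pos (show ((0 : Fin (r + 1)) : ℕ) < i by simp only [Fin.val_zero]; omega)]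
        simp only [Fin.val_zero]
        omega
      · have hjr : (j : ℕ) < r := by
          have := j.isLt
          have : (j : ℕ) ≠ r := fun h => hjt (Fin.ext (h.trans htv.symm))
          omega
        rw [if_neg hjt]
        have hcoe := hrot j hjr
        by_cases hjs : j = s
        · rw [if_pos hjs, hcoe, hjs, hsv]
          refine congrArg (fun e => g k ^ e) ?_
          rw [if_neg (by omega : ¬ i - 1 + 1 < i)]
          omega
        · rw [if_neg hjs, hcoe]
          have hjv : (j : ℕ) ≠ i - 1 := fun h => hjs (Fin.ext (h.trans hsv.symm))
          refine congrArg (fun e => g k ^ e) ?_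
          split_ifs <;> omega
    have h_ba : (R0.updateRow s vb).updateRow t va
        = (NmatS r g (i + 1) (m' + 1)).submatrix (finRotate (r + 1)) id := by
      rw [hRb]
      ext j k
      simp only [Matrix.updateRow_apply, Matrix.submatrix_apply, id_eq, NmatS, Nmat,
        Matrix.of_apply, hR0, hva]
      by_cases hjt : j = t
      · rw [if_pos hjt, hjt, hrotl]
        refine congrArg (fun e => g k ^ e) ?_
        rw [if_pos (show ((0 : Fin (r + 1)) : ℕ) < i + 1 by simp only [Fin.val_zero]; omega)]
        simp only [Fin.val_zero]
        omega
      · have hjr : (j : ℕ) < r := by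
          have := j.isLt
          have : (j : ℕ) ≠ r := fun h => hjt (Fin.ext (h.trans htv.symm))
          omega
        rw [if_neg hjt, hrot j hjr]
        refine congrArg (fun e => g k ^ e) ?_
        split_ifs <;> omega
    have h_bc : (R0.updateRow s vb).updateRow t vc
        = (NmatS r g i m').submatrix σ2 id := by
      rw [hRb]
      ext j k
      simp only [Matrix.updateRow_apply, Matrix.submatrix_apply, id_eq, NmatS, Nmat,
        Matrix.of_apply, hR0, hvc]
      by_cases hjt : j = t
      · rw [if_pos hjt, hjt, hσ2c, hcv]
        refine congrArg (fun e => g k ^ e) ?_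
        rw [if_neg (by omega : ¬ i < i)]
        omega
      · have hjr : (j : ℕ) < r := by
          have := j.isLt
          have : (j : ℕ) ≠ r := fun h => hjt (Fin.ext (h.trans htv.symm))
          omega
        rw [if_neg hjt]
        by_cases hji : (j : ℕ) < i
        · rw [hσ2a j hji]
          refine congrArg (fun e => g k ^ e) ?_
          split_ifs <;> omega
        · rw [hσ2b j (by omega) hjr, hadd1 j hjr]
          refine congrArg (fun e => g k ^ e) ?_
          split_ifs <;> omega
    -- determinant versions with signs
    have d_bd : ((R0.updateRow s vb).updateRow t vd).det = R0.det := by rw [h_bd]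
    have d_cd : ((R0.updateRow s vc).updateRow t vd).det = (Nmat r g (i - 1) (m' + 1)).det := by
      rw [h_cd]
    have d_ad : ((R0.updateRow s va).updateRow t vd).det
        = (-1 : ℂ) ^ (i - 1) * (Nmat r g i (m' + 2)).det := by
      rw [h_ad, Matrix.det_permute, Fin.sign_cycleRange, hsv, cast_sign]
    have d_ca : ((R0.updateRow s vc).updateRow t va).det
        = (-1 : ℂ) ^ r * R0.det := by
      rw [h_ca, Matrix.det_permute, sign_finRotate, Nat.add_sub_cancel, cast_sign, det_shift g hgprod, ← hR0]
    have d_ba : ((R0.updateRow s vb).updateRow t va).det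
        = (-1 : ℂ) ^ r * (Nmat r g (i + 1) (m' + 1)).det := by
      rw [h_ba, Matrix.det_permute, sign_finRotate, Nat.add_sub_cancel, cast_sign, det_shift g hgprod]
    have d_bc : ((R0.updateRow s vb).updateRow t vc).det
        = ((-1 : ℂ) ^ i * (-1 : ℂ) ^ r) * (Nmat r g i m').det := by
      rw [h_bc, Matrix.det_permute, det_shift g hgprod]
      congr 1
      rw [Equiv.Perm.sign_mul, Equiv.Perm.sign_inv, Fin.sign_cycleRange, Fin.sign_cycleRange,
        hcv, Fin.val_last]
      push_cast
      ring
    have P := pluecker R0 hst va vb vc vd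
    rw [d_cd, d_ba, d_ad, d_bc, d_ca, d_bd] at P
    have e1 : (-1 : ℂ) ^ r * (-1 : ℂ) ^ r = 1 := by
      rw [← pow_add]; exact Even.neg_one_pow ⟨r, rfl⟩
    have e2 : (-1 : ℂ) ^ (i - 1) * (-1 : ℂ) ^ i = -1 := by
      rw [← pow_add]; exact Odd.neg_one_pow ⟨i - 1, by omega⟩
    linear_combination (-1 : ℂ) ^ r * P
      - ((Nmat r g (i-1) (m'+1)).det * (Nmat r g (i+1) (m'+1)).det
          - (-1 : ℂ) ^ (i-1) * (-1 : ℂ) ^ i * (Nmat r g i (m'+2)).det * (Nmat r g i m').det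
          - R0.det * R0.det) * e1
      + (Nmat r g i (m'+2)).det * (Nmat r g i m').det * e2
  rw [hz, hz, hz, hz, hz]
  rw [show m' + 1 - 1 = m' from rfl]
  rw [show m' + 1 + 1 = m' + 2 from rfl]
  field_simp [hV]
  linear_combination key
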